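/- Let K be an index set and Q a nonempty subset of ℝ^K, and suppose Q is finitely convexly protected: for every finite Γ ⊆ K, no point of the closed convex hull of Q|_Γ that extends to a point of the closed convex hull of Q (in ℝ^K) is exposed relative to the convex hull of Q|_Γ. Then an estimate function e ∈ ℝ^K admits no Dutch book (i.e., there is no finite Γ ⊆ K and s ∈ ℝ^Γ with ⟪s, q|_Γ⟫ < ⟪s, e|_Γ⟫ for all q ∈ Q) if and only if e lies in the closed convex hull of Q in ℝ^K. -/

import Mathlib

open RealInnerProductSpace

noncomputable def resL {K : Type*} (Γ : Finset K) : (K → ℝ) →ₗ[ℝ] EuclideanSpace ℝ Γ where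
  toFun f := WithLp.toLp 2 (fun k : Γ => f k)
  map_add' _ _ := rfl
  map_smul' _ _ := rfl

theorem resL_cont {K : Type*} (Γ : Finset K) : Continuous (resL Γ) := by
  have : Continuous fun (f : K → ℝ) (k : Γ) => f k := continuous_pi fun k => continuous_apply _
  exact (PiLp.continuous_toLp 2 fun _ : Γ => ℝ).comp this

/-- If a nonempty `Q ⊆ ℝ^K` is finitely convexly protected (for each
finite `Γ ⊆ K`, no point of the closed convex hull of `Q|_Γ` that extends to a point of
the closed convex hull of `Q` is exposed relative to the convex hull of `Q|_Γ`), then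
`e` admits no Dutch book iff `e` lies in the closed convex hull of `Q` in `ℝ^K`. -/
theorem stmt7 {K : Type*} (Q : Set (K → ℝ)) (hQ : Q.Nonempty)
    (hprot : ∀ Γ : Finset K, ¬ ∃ b : EuclideanSpace ℝ Γ,
        b ∈ closure (convexHull ℝ ((fun f : K → ℝ => (WithLp.toLp 2 (fun k : Γ => f k) : EuclideanSpace ℝ Γ)) '' Q)) ∧
        (∃ a ∈ closure (convexHull ℝ Q), (WithLp.toLp 2 (fun k : Γ => a k) : EuclideanSpace ℝ Γ) = b) ∧
        (∃ s : EuclideanSpace ℝ Γ, s ≠ 0 ∧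
          ∀ c ∈ convexHull ℝ ((fun f : K → ℝ => (WithLp.toLp 2 (fun k : Γ => f k) : EuclideanSpace ℝ Γ)) '' Q),
            ⟪s, c⟫ < ⟪s, b⟫))
    (e : K → ℝ) :
    (¬ ∃ (Γ : Finset K) (s : EuclideanSpace ℝ Γ), ∀ q ∈ Q,
        ⟪s, (WithLp.toLp 2 (fun k : Γ => q k) : EuclideanSpace ℝ Γ)⟫ < ⟪s, (WithLp.toLp 2 (fun k : Γ => e k) : EuclideanSpace ℝ Γ)⟫) ↔
      e ∈ closure (convexHull ℝ Q) := by
  classical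
  constructor
  · intro hnd
    rw [mem_closure_iff_nhds]
    intro t ht
    rw [nhds_pi, Filter.mem_pi] at ht
    obtain ⟨I, hIfin, V, hV, hVt⟩ := ht
    set Γ : Finset K := hIfin.toFinset with hΓ
    have key : (WithLp.toLp 2 (fun k : Γ => e k) : EuclideanSpace ℝ Γ) ∈
        closure (convexHull ℝ ((fun f : K → ℝ => (WithLp.toLp 2 (fun k : Γ => f k) : EuclideanSpace ℝ Γ)) '' Q)) := by
      by_contra hmem
      obtain ⟨f, u, hfu, huf⟩ := geometric_hahn_banach_closed_point
        ((convex_convexHull ℝ _).closure) isClosed_closure hmem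
      refine hnd ⟨Γ, (InnerProductSpace.toDual ℝ _).symm f, fun q hq => ?_⟩
      rw [InnerProductSpace.toDual_symm_apply, InnerProductSpace.toDual_symm_apply]
      exact lt_trans (hfu _ (subset_closure (subset_convexHull ℝ _ ⟨q, hq, rfl⟩))) huf
    have hW : {y : EuclideanSpace ℝ Γ | ∀ k : Γ, y k ∈ V k} ∈
        nhds (WithLp.toLp 2 (fun k : Γ => e k) : EuclideanSpace ℝ Γ) := by
      have heq : {y : EuclideanSpace ℝ Γ | ∀ k : Γ, y k ∈ V k}
          = ⋂ k : Γ, (fun y : EuclideanSpace ℝ Γ => y k) ⁻¹' V k := by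
        ext; simp [Set.mem_iInter]
      rw [heq]
      exact Filter.iInter_mem.2 fun k =>
        (EuclideanSpace.proj (𝕜 := ℝ) k).continuous.continuousAt.preimage_mem_nhds (hV k)
    obtain ⟨y, hyW, hymem⟩ := mem_closure_iff_nhds.1 key _ hW
    have hcoe : ⇑(resL Γ) = fun f : K → ℝ => (WithLp.toLp 2 (fun k : Γ => f k) : EuclideanSpace ℝ Γ) := rfl
    have himg : convexHull ℝ ((fun f : K → ℝ => (WithLp.toLp 2 (fun k : Γ => f k) : EuclideanSpace ℝ Γ)) '' Q)
        = (fun f : K → ℝ => (WithLp.toLp 2 (fun k : Γ => f k) : EuclideanSpace ℝ Γ)) '' (convexHull ℝ Q) := by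
      rw [← hcoe]; exact ((resL Γ).image_convexHull Q).symm
    rw [himg] at hymem
    obtain ⟨c, hcC, hcy⟩ := hymem
    refine ⟨c, hVt ?_, hcC⟩
    intro i hi
    have hiΓ : i ∈ Γ := hIfin.mem_toFinset.2 hi
    subst hcy
    exact hyW ⟨i, hiΓ⟩
  · rintro he ⟨Γ, s, hs⟩
    refine hprot Γ ⟨(WithLp.toLp 2 (fun k : Γ => e k) : EuclideanSpace ℝ Γ), ?_, ⟨e, he, rfl⟩, s, ?_, ?_⟩
    · have h1 : (WithLp.toLp 2 (fun k : Γ => e k) : EuclideanSpace ℝ Γ) ∈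
          (fun f : K → ℝ => (WithLp.toLp 2 (fun k : Γ => f k) : EuclideanSpace ℝ Γ)) '' closure (convexHull ℝ Q) :=
        ⟨e, he, rfl⟩
      have h2 := image_closure_subset_closure_image (s := convexHull ℝ Q) (resL_cont Γ)
      have hcoe : ⇑(resL Γ) = fun f : K → ℝ => (WithLp.toLp 2 (fun k : Γ => f k) : EuclideanSpace ℝ Γ) := rfl
      have h3 := h2 (by rw [hcoe]; exact h1)
      rw [(resL Γ).image_convexHull, hcoe] at h3
      exact h3
    · rintro rfl
      obtain ⟨q, hq⟩ := hQ
      simpa using hs q hq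
    · intro c hc
      refine convexHull_min ?_ (convex_halfSpace_lt (innerSL ℝ s).isLinear _) hc
      rintro x ⟨q, hq, rfl⟩
      exact hs q hq
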